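/- The intersection of PM_n with the hyperplane {(x,w) : ∑_{ij} x_{ij} + (1 − w)·n² = n/2} is a face of PM_n whose projection onto the x-coordinates equals EP_n, the convex hull of edge incidence vectors of perfect matchings of the complete graph K_n. -/
import Mathlib


open scoped Classical

/-- Edges of the complete graph on `n` vertices: pairs `(i, j)` with `i < j`. -/
abbrev Edg (n : ℕ) := {p : Fin n × Fin n // p.1 < p.2}

/-- 0/1 real value of a boolean. -/
def bval (b : Bool) : ℝ := if b then 1 else 0

/-- Graph on `n` vertices with edge incidence vector `x`. -/
def graphOf {n : ℕ} (x : Edg n → Bool) : SimpleGraph (Fin n) :=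
  SimpleGraph.fromEdgeSet {s | ∃ e : Edg n, x e = true ∧ s = s(e.1.1, e.1.2)}

/-- `G(x)` has a perfect matching. -/
def hasPM {n : ℕ} (x : Edg n → Bool) : Prop :=
  ∃ M : (graphOf x).Subgraph, M.IsPerfectMatching

/-- The point `(x, w_x)` of the perfect matching polytope `PM_n`. -/
noncomputable def pmPt {n : ℕ} (x : Edg n → Bool) : (Edg n → ℝ) × ℝ :=
  (fun e => bval (x e), if hasPM x then 1 else 0)

/-- The perfect matching polytope `PM_n`. -/
noncomputable def PMpoly (n : ℕ) : Set ((Edg n → ℝ) × ℝ) :=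
  convexHull ℝ (Set.range (pmPt (n := n)))

/-- `x` is the edge incidence vector of a perfect matching of `K_n`:
every vertex is incident to exactly one chosen edge. -/
def isPMvec {n : ℕ} (x : Edg n → Bool) : Prop :=
  ∀ v : Fin n, ∃! e : Edg n, x e = true ∧ (e.1.1 = v ∨ e.1.2 = v)

/-- Edmonds' perfect matching polytope `EP_n`. -/
noncomputable def EPpoly (n : ℕ) : Set (Edg n → ℝ) :=
  convexHull ℝ {p | ∃ x : Edg n → Bool, isPMvec x ∧ p = fun e => bval (x e)}

namespace EPface

variable {n : ℕ}

/-- The set of chosen edges. -/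
noncomputable def Tset (x : Edg n → Bool) : Finset (Edg n) :=
  Finset.univ.filter (fun e => x e = true)

lemma sum_bval (x : Edg n → Bool) :
    (∑ e : Edg n, bval (x e)) = ((Tset x).card : ℝ) := by
  rw [Tset, Finset.card_filter]
  push_cast
  apply Finset.sum_congr rfl
  intro e _
  simp [bval]

lemma graphOf_adj {x : Edg n → Bool} {a b : Fin n} :
    (graphOf x).Adj a b ↔ ∃ e : Edg n, x e = true ∧ s(a, b) = s(e.1.1, e.1.2) := by
  rw [graphOf, SimpleGraph.fromEdgeSet_adj]
  constructor
  · rintro ⟨⟨e, hx, hs⟩, -⟩; exact ⟨e, hx, hs⟩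
  · rintro ⟨e, hx, hs⟩
    refine ⟨⟨e, hx, hs⟩, ?_⟩
    rw [Sym2.eq_iff] at hs
    rcases hs with ⟨h1, h2⟩ | ⟨h1, h2⟩
    · rw [h1, h2]; exact ne_of_lt e.2
    · rw [h1, h2]; exact (ne_of_lt e.2).symm

lemma isPMvec_hasPM {x : Edg n → Bool} (h : isPMvec x) : hasPM x := by
  refine ⟨⊤, ?_⟩
  rw [SimpleGraph.Subgraph.isPerfectMatching_iff]
  intro v
  obtain ⟨e, ⟨hx, hv⟩, huniq⟩ := h v
  have hne := e.2
  have key : ∀ w : Fin n, (⊤ : (graphOf x).Subgraph).Adj v w →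
      (v = e.1.1 ∧ w = e.1.2) ∨ (v = e.1.2 ∧ w = e.1.1) := by
    intro w hw
    rw [SimpleGraph.Subgraph.top_adj, graphOf_adj] at hw
    obtain ⟨e', hx', hs⟩ := hw
    rw [Sym2.eq_iff] at hs
    rcases hs with ⟨h1, h2⟩ | ⟨h1, h2⟩
    · have he : e' = e := huniq e' ⟨hx', Or.inl h1.symm⟩
      subst he; exact Or.inl ⟨h1, h2⟩
    · have he : e' = e := huniq e' ⟨hx', Or.inr h1.symm⟩
      subst he; exact Or.inr ⟨h1, h2⟩
  rcases hv with hv | hv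
  · refine ⟨e.1.2, ?_, ?_⟩
    · simp only [SimpleGraph.Subgraph.top_adj]
      rw [graphOf_adj]
      exact ⟨e, hx, by rw [hv]⟩
    · intro w hw
      rcases key w hw with ⟨h1, h2⟩ | ⟨h1, h2⟩
      · exact h2
      · exact absurd (hv.trans h1) (ne_of_lt hne)
  · refine ⟨e.1.1, ?_, ?_⟩
    · simp only [SimpleGraph.Subgraph.top_adj]
      rw [graphOf_adj]
      refine ⟨e, hx, ?_⟩
      rw [← hv]; exact Sym2.eq_swap
    · intro w hw
      rcases key w hw with ⟨h1, h2⟩ | ⟨h1, h2⟩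
      · exact absurd (hv.trans h1).symm (ne_of_lt hne)
      · exact h2

section counting

variable (ψ : Fin n → Edg n)

/-- Fiber of the vertex-to-edge assignment. -/
noncomputable def fib (e : Edg n) : Finset (Fin n) :=
  Finset.univ.filter (fun v => ψ v = e)

variable {x : Edg n → Bool} {ψ}

lemma fib_sub (h2 : ∀ v, v = (ψ v).1.1 ∨ v = (ψ v).1.2) (e : Edg n) :
    fib ψ e ⊆ {e.1.1, e.1.2} := by
  intro v hv
  rw [fib, Finset.mem_filter] at hv
  rcases h2 v with h | h <;> rw [hv.2] at h <;> simp [h]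

lemma pair_card (e : Edg n) : ({e.1.1, e.1.2} : Finset (Fin n)).card = 2 := by
  rw [Finset.card_insert_of_notMem (by simp [ne_of_lt e.2]), Finset.card_singleton]

lemma card_n (h1 : ∀ v, x (ψ v) = true) :
    n = ∑ e ∈ Tset x, (fib ψ e).card := by
  have hmem : ∀ v ∈ (Finset.univ : Finset (Fin n)), ψ v ∈ Tset x := by
    intro v _; simp [Tset, h1 v]
  have := Finset.card_eq_sum_card_fiberwise hmem
  simpa [fib] using this

lemma count_le (h1 : ∀ v, x (ψ v) = true) (h2 : ∀ v, v = (ψ v).1.1 ∨ v = (ψ v).1.2) :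
    n ≤ 2 * (Tset x).card := by
  calc n = ∑ e ∈ Tset x, (fib ψ e).card := card_n h1
    _ ≤ ∑ _e ∈ Tset x, 2 := by
        refine Finset.sum_le_sum fun e _ => ?_
        calc (fib ψ e).card ≤ ({e.1.1, e.1.2} : Finset (Fin n)).card :=
              Finset.card_le_card (fib_sub h2 e)
          _ = 2 := pair_card e
    _ = 2 * (Tset x).card := by rw [Finset.sum_const, smul_eq_mul, mul_comm]

lemma count_tight (h1 : ∀ v, x (ψ v) = true) (h2 : ∀ v, v = (ψ v).1.1 ∨ v = (ψ v).1.2)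
    (hc : 2 * (Tset x).card ≤ n) :
    ∀ e ∈ Tset x, ψ e.1.1 = e ∧ ψ e.1.2 = e := by
  have hle : ∀ e ∈ Tset x, (fib ψ e).card ≤ 2 := by
    intro e _
    calc (fib ψ e).card ≤ ({e.1.1, e.1.2} : Finset (Fin n)).card :=
          Finset.card_le_card (fib_sub h2 e)
      _ = 2 := pair_card e
  have hfib : ∀ e ∈ Tset x, (fib ψ e).card = 2 := by
    have hsl : ∑ e ∈ Tset x, (fib ψ e).card ≤ ∑ _e ∈ Tset x, 2 := Finset.sum_le_sum hle
    have h1' : ∑ e ∈ Tset x, (fib ψ e).card = n := (card_n h1).symm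
    have h2' : (∑ _e ∈ Tset x, 2) = 2 * (Tset x).card := by
      rw [Finset.sum_const, smul_eq_mul, mul_comm]
    have hsum : ∑ e ∈ Tset x, (fib ψ e).card = ∑ _e ∈ Tset x, 2 := by omega
    exact fun e he => (Finset.sum_eq_sum_iff_of_le hle).1 hsum e he
  intro e he
  have heq : fib ψ e = {e.1.1, e.1.2} :=
    Finset.eq_of_subset_of_card_le (fib_sub h2 e) (by simp [pair_card e, hfib e he])
  constructor
  · have hm : e.1.1 ∈ fib ψ e := by rw [heq]; simp
    simpa [fib] using hm
  · have hm : e.1.2 ∈ fib ψ e := by rw [heq]; simp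
    simpa [fib] using hm

lemma count_ge (h1 : ∀ v, x (ψ v) = true)
    (h3 : ∀ e ∈ Tset x, ψ e.1.1 = e ∧ ψ e.1.2 = e) :
    2 * (Tset x).card ≤ n := by
  calc 2 * (Tset x).card = ∑ _e ∈ Tset x, 2 := by
        rw [Finset.sum_const, smul_eq_mul, mul_comm]
    _ ≤ ∑ e ∈ Tset x, (fib ψ e).card := by
        refine Finset.sum_le_sum fun e he => ?_
        have hsub : ({e.1.1, e.1.2} : Finset (Fin n)) ⊆ fib ψ e := by
          intro v hv
          rw [fib, Finset.mem_filter]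
          refine ⟨Finset.mem_univ v, ?_⟩
          rcases Finset.mem_insert.1 hv with h | h
          · rw [h]; exact (h3 e he).1
          · rw [Finset.mem_singleton.1 h]; exact (h3 e he).2
        calc 2 = ({e.1.1, e.1.2} : Finset (Fin n)).card := (pair_card e).symm
          _ ≤ (fib ψ e).card := Finset.card_le_card hsub
    _ = n := (card_n h1).symm

end counting

lemma hasPM_exists_psi {x : Edg n → Bool} (h : hasPM x) :
    ∃ ψ : Fin n → Edg n, (∀ v, x (ψ v) = true) ∧ (∀ v, v = (ψ v).1.1 ∨ v = (ψ v).1.2) := by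
  obtain ⟨M, hM⟩ := h
  rw [SimpleGraph.Subgraph.isPerfectMatching_iff] at hM
  have key : ∀ v : Fin n, ∃ e : Edg n, x e = true ∧ (v = e.1.1 ∨ v = e.1.2) := by
    intro v
    obtain ⟨w, hw, -⟩ := hM v
    have hadj := M.adj_sub hw
    rw [graphOf_adj] at hadj
    obtain ⟨e, hx, hs⟩ := hadj
    rw [Sym2.eq_iff] at hs
    rcases hs with ⟨ha, -⟩ | ⟨ha, -⟩
    · exact ⟨e, hx, Or.inl ha⟩
    · exact ⟨e, hx, Or.inr ha⟩
  choose ψ hψ1 hψ2 using key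
  exact ⟨ψ, hψ1, hψ2⟩

lemma hasPM_card_le {x : Edg n → Bool} (h : hasPM x) : n ≤ 2 * (Tset x).card := by
  obtain ⟨ψ, h1, h2⟩ := hasPM_exists_psi h
  exact count_le h1 h2

lemma isPMvec_of_card {x : Edg n → Bool} (h : hasPM x) (hc : 2 * (Tset x).card = n) :
    isPMvec x := by
  obtain ⟨ψ, h1, h2⟩ := hasPM_exists_psi h
  have h3 := count_tight h1 h2 hc.le
  intro v
  refine ⟨ψ v, ⟨h1 v, ?_⟩, ?_⟩
  · rcases h2 v with h' | h'
    · exact Or.inl h'.symm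
    · exact Or.inr h'.symm
  · rintro e' ⟨hx', hv'⟩
    have he'T : e' ∈ Tset x := by simp [Tset, hx']
    rcases hv' with hv' | hv'
    · rw [← hv']; exact ((h3 e' he'T).1).symm
    · rw [← hv']; exact ((h3 e' he'T).2).symm

lemma isPMvec_card {x : Edg n → Bool} (h : isPMvec x) : 2 * (Tset x).card = n := by
  have key : ∀ v : Fin n, ∃ e : Edg n, x e = true ∧ (v = e.1.1 ∨ v = e.1.2) := by
    intro v
    obtain ⟨e, ⟨hx, hv⟩, -⟩ := h v
    rcases hv with hv | hv
    · exact ⟨e, hx, Or.inl hv.symm⟩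
    · exact ⟨e, hx, Or.inr hv.symm⟩
  choose ψ h1 h2 using key
  have h3 : ∀ e ∈ Tset x, ψ e.1.1 = e ∧ ψ e.1.2 = e := by
    intro e he
    have hxe : x e = true := by simpa [Tset] using he
    constructor
    · refine (h e.1.1).unique ?_ ?_
      · refine ⟨h1 e.1.1, ?_⟩
        rcases h2 e.1.1 with h' | h'
        · exact Or.inl h'.symm
        · exact Or.inr h'.symm
      · exact ⟨hxe, Or.inl rfl⟩
    · refine (h e.1.2).unique ?_ ?_
      · refine ⟨h1 e.1.2, ?_⟩
        rcases h2 e.1.2 with h' | h'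
        · exact Or.inl h'.symm
        · exact Or.inr h'.symm
      · exact ⟨hxe, Or.inr rfl⟩
  exact le_antisymm (count_ge h1 h3) (count_le h1 h2)

/-- The exposing linear functional. -/
noncomputable def lfun (n : ℕ) : ((Edg n → ℝ) × ℝ) →ₗ[ℝ] ℝ where
  toFun p := (n : ℝ) ^ 2 * p.2 - ∑ e : Edg n, p.1 e
  map_add' p q := by
    simp only [Prod.snd_add, Prod.fst_add, Pi.add_apply, Finset.sum_add_distrib]
    ring
  map_smul' c p := by
    simp only [Prod.smul_snd, Prod.smul_fst, Pi.smul_apply, smul_eq_mul, RingHom.id_apply,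
      Finset.mul_sum]
    rw [← Finset.mul_sum]
    ring

@[simp] lemma lfun_apply (p : (Edg n → ℝ) × ℝ) :
    lfun n p = (n : ℝ) ^ 2 * p.2 - ∑ e : Edg n, p.1 e := rfl

lemma lfun_vertex (x : Edg n → Bool) :
    lfun n (pmPt x) = (if hasPM x then (n : ℝ) ^ 2 else 0) - ((Tset x).card : ℝ) := by
  rw [lfun_apply]
  show (n : ℝ) ^ 2 * (if hasPM x then (1 : ℝ) else 0) - (∑ e : Edg n, bval (x e)) = _
  rw [sum_bval]
  split_ifs <;> ring

lemma crux (hpos : 0 < n) (x : Edg n → Bool) :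
    lfun n (pmPt x) ≤ (n : ℝ) ^ 2 - n / 2 ∧
      (lfun n (pmPt x) = (n : ℝ) ^ 2 - n / 2 ↔ isPMvec x) := by
  rw [lfun_vertex]
  have h1n : (1 : ℝ) ≤ n := by exact_mod_cast hpos
  have hbig : (n : ℝ) / 2 < (n : ℝ) ^ 2 := by nlinarith
  by_cases h : hasPM x
  · rw [if_pos h]
    have hle := hasPM_card_le h
    have hler : (n : ℝ) ≤ 2 * ((Tset x).card : ℝ) := by exact_mod_cast hle
    refine ⟨by linarith, ?_, ?_⟩
    · intro heq
      have hcn : 2 * (Tset x).card = n := by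
        have hr : (2 * (Tset x).card : ℝ) = n := by push_cast; linarith
        exact_mod_cast hr
      exact isPMvec_of_card h hcn
    · intro hv
      have hcn := isPMvec_card hv
      have hr : (2 * (Tset x).card : ℝ) = n := by exact_mod_cast hcn
      push_cast at hr
      linarith
  · rw [if_neg h]
    have hc0 : (0 : ℝ) ≤ ((Tset x).card : ℝ) := Nat.cast_nonneg _
    refine ⟨by linarith, ?_, ?_⟩
    · intro heq; exfalso; linarith
    · intro hv; exact absurd (isPMvec_hasPM hv) h

lemma cond_iff (p : (Edg n → ℝ) × ℝ) :
    ((∑ e : Edg n, p.1 e) + (1 - p.2) * (n : ℝ) ^ 2 = (n : ℝ) / 2) ↔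
      lfun n p = (n : ℝ) ^ 2 - n / 2 := by
  rw [lfun_apply]
  constructor <;> intro h <;> linarith

lemma bound (hpos : 0 < n) {p : (Edg n → ℝ) × ℝ} (hp : p ∈ PMpoly n) :
    lfun n p ≤ (n : ℝ) ^ 2 - n / 2 := by
  have hsub : PMpoly n ⊆ {q | lfun n q ≤ (n : ℝ) ^ 2 - n / 2} := by
    rw [PMpoly]
    apply convexHull_min ?_ (convex_halfSpace_le (lfun n).isLinear _)
    rintro q ⟨x, rfl⟩
    exact (crux hpos x).1
  exact hsub hp

lemma face_eq (hpos : 0 < n) :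
    PMpoly n ∩ {p | (∑ e : Edg n, p.1 e) + (1 - p.2) * (n : ℝ) ^ 2 = (n : ℝ) / 2}
      = convexHull ℝ (pmPt '' {x : Edg n → Bool | isPMvec x}) := by
  apply Set.Subset.antisymm
  · rintro p ⟨hp, hH⟩
    rw [Set.mem_setOf_eq, cond_iff] at hH
    rw [PMpoly, convexHull_eq] at hp
    obtain ⟨ι, t, w, z, hw0, hw1, hz, hcm⟩ := hp
    have hzle : ∀ i ∈ t, lfun n (z i) ≤ (n : ℝ) ^ 2 - n / 2 := by
      intro i hi
      obtain ⟨x, hx⟩ := hz i hi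
      rw [← hx]
      exact (crux hpos x).1
    have hlp : lfun n p = ∑ i ∈ t, w i * lfun n (z i) := by
      rw [← hcm, Finset.centerMass_eq_of_sum_1 _ _ hw1, map_sum]
      simp [smul_eq_mul]
    have hsum0 : ∑ i ∈ t, w i * (((n : ℝ) ^ 2 - n / 2) - lfun n (z i)) = 0 := by
      have hexp : ∑ i ∈ t, w i * (((n : ℝ) ^ 2 - n / 2) - lfun n (z i))
          = (∑ i ∈ t, w i) * ((n : ℝ) ^ 2 - n / 2) - ∑ i ∈ t, w i * lfun n (z i) := by
        rw [Finset.sum_mul, ← Finset.sum_sub_distrib]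
        exact Finset.sum_congr rfl fun i _ => by ring
      rw [hexp, hw1, one_mul, ← hlp, hH, sub_self]
    have hterm : ∀ i ∈ t, w i * (((n : ℝ) ^ 2 - n / 2) - lfun n (z i)) = 0 :=
      (Finset.sum_eq_zero_iff_of_nonneg fun i hi =>
        mul_nonneg (hw0 i hi) (sub_nonneg.2 (hzle i hi))).1 hsum0
    have hz' : ∀ i ∈ t.filter (fun i => w i ≠ 0),
        z i ∈ pmPt '' {x : Edg n → Bool | isPMvec x} := by
      intro i hi
      rw [Finset.mem_filter] at hi
      obtain ⟨x, hx⟩ := hz i hi.1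
      have h0 := hterm i hi.1
      rcases mul_eq_zero.1 h0 with h0 | h0
      · exact absurd h0 hi.2
      · have hv : lfun n (z i) = (n : ℝ) ^ 2 - n / 2 := (sub_eq_zero.1 h0).symm
        rw [← hx] at hv
        exact ⟨x, (crux hpos x).2.1 hv, hx⟩
    have hps : p = (t.filter (fun i => w i ≠ 0)).centerMass w z := by
      rw [Finset.centerMass_filter_ne_zero, hcm]
    rw [hps]
    apply Finset.centerMass_mem_convexHull
    · intro i hi; exact hw0 i (Finset.mem_filter.1 hi).1
    · rw [Finset.sum_filter_ne_zero, hw1]; norm_num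
    · exact hz'
  · apply convexHull_min
    · rintro q ⟨x, hx, rfl⟩
      refine ⟨subset_convexHull ℝ _ ⟨x, rfl⟩, ?_⟩
      rw [Set.mem_setOf_eq, cond_iff]
      exact (crux hpos x).2.2 hx
    · refine Convex.inter (convex_convexHull ℝ _) ?_
      have hset : {p : (Edg n → ℝ) × ℝ |
          (∑ e : Edg n, p.1 e) + (1 - p.2) * (n : ℝ) ^ 2 = (n : ℝ) / 2}
          = {p | lfun n p = (n : ℝ) ^ 2 - n / 2} := Set.ext fun p => cond_iff p
      rw [hset]
      exact convex_hyperplane (lfun n).isLinear _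

end EPface

theorem ep_is_face_of_pm (n : ℕ) (hn : Even n) (hpos : 0 < n) :
    IsExposed ℝ (PMpoly n)
      (PMpoly n ∩ {p | (∑ e : Edg n, p.1 e) + (1 - p.2) * (n : ℝ) ^ 2 = (n : ℝ) / 2}) ∧
    Prod.fst ''
      (PMpoly n ∩ {p | (∑ e : Edg n, p.1 e) + (1 - p.2) * (n : ℝ) ^ 2 = (n : ℝ) / 2})
      = EPpoly n := by
  constructor
  · intro hB
    obtain ⟨q, hq, hqH⟩ := hB
    rw [Set.mem_setOf_eq, EPface.cond_iff] at hqH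
    refine ⟨LinearMap.toContinuousLinearMap (EPface.lfun n), ?_⟩
    ext p
    simp only [Set.mem_inter_iff, Set.mem_setOf_eq, Set.mem_sep_iff,
      LinearMap.coe_toContinuousLinearMap']
    constructor
    · rintro ⟨hp, hH⟩
      rw [EPface.cond_iff] at hH
      refine ⟨hp, fun y hy => ?_⟩
      rw [hH]
      exact EPface.bound hpos hy
    · rintro ⟨hp, hmax⟩
      refine ⟨hp, ?_⟩
      rw [EPface.cond_iff]
      exact le_antisymm (EPface.bound hpos hp)
        (le_trans (le_of_eq hqH.symm) (hmax q hq))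
  · rw [EPface.face_eq hpos]
    rw [show (Prod.fst : (Edg n → ℝ) × ℝ → (Edg n → ℝ)) = ⇑(LinearMap.fst ℝ (Edg n → ℝ) ℝ)
      from rfl]
    rw [LinearMap.image_convexHull, EPpoly]
    congr 1
    ext p
    constructor
    · rintro ⟨q, ⟨x, hx, rfl⟩, rfl⟩
      exact ⟨x, hx, rfl⟩
    · rintro ⟨x, hx, rfl⟩
      exact ⟨pmPt x, ⟨x, hx, rfl⟩, rfl⟩
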